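/- Let F be a field of characteristic p > 0 and let A = Fx_0 + ... + Fx_p be an abelian Lie algebra of dimension p+1. Define L = A + Fλ + Fπ with brackets [λ, x_i] = x_{i−1}, [π, x_i] = x_{i−p}, [λ, π] = 0 (where x_i = 0 for i < 0), and define H = A + Fλ + Fz with [λ, x_i] = x_{i−1} and z central. Then L and H are both nilpotent of class p+1 and metabelian, the center of L is Fx_0 while the center of H is Fz + Fx_0, so L and H are not isomorphic as Lie algebras. -/

import Mathlib

open Submodule

section helpers

variable {F M : Type*} [Field F] [LieRing M] [LieAlgebra F M] {p : ℕ}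

noncomputable def lieRightMap (F : Type*) {M : Type*} [Field F] [LieRing M] [LieAlgebra F M]
    (w : M) : M →ₗ[F] M where
  toFun u := ⁅u, w⁆
  map_add' a b := add_lie a b w
  map_smul' t a := smul_lie t a w

noncomputable def lieLeftMap (F : Type*) {M : Type*} [Field F] [LieRing M] [LieAlgebra F M]
    (w : M) : M →ₗ[F] M where
  toFun u := ⁅w, u⁆
  map_add' a b := lie_add w a b
  map_smul' t a := lie_smul t w a

variable (b : Module.Basis (Fin (p + 1) ⊕ Bool) F M)

noncomputable def Sk (k : ℕ) : Submodule F M :=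
  Submodule.span F (b '' (Sum.inl '' {i : Fin (p + 1) | (i : ℕ) + k ≤ p}))

lemma lie_expand_right (y w : M) : ⁅y, w⁆ = ∑ t, b.repr y t • ⁅b t, w⁆ := by
  have : ⁅y, w⁆ = lieRightMap F w y := rfl
  rw [this]
  conv_lhs => rw [← b.sum_repr y]
  rw [map_sum]
  simp [lieRightMap]

lemma lie_expand_left (y w : M) : ⁅w, y⁆ = ∑ t, b.repr y t • ⁅w, b t⁆ := by
  have : ⁅w, y⁆ = lieLeftMap F w y := rfl
  rw [this]
  conv_lhs => rw [← b.sum_repr y]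
  rw [map_sum]
  simp [lieLeftMap]

lemma Sk_antitone {k l : ℕ} (h : k ≤ l) : Sk b l ≤ Sk b k := by
  apply span_mono; apply Set.image_mono; apply Set.image_mono
  intro i hi
  simp only [Set.mem_setOf_eq] at hi ⊢
  omega

lemma Sk_top : Sk b (p + 1) = ⊥ := by
  have h : {i : Fin (p + 1) | (i : ℕ) + (p + 1) ≤ p} = ∅ := by
    ext i; simp; omega
  rw [Sk, h]
  simp

end helpers

section generic

variable {F M : Type*} [Field F] [LieRing M] [LieAlgebra F M] {p : ℕ}
variable (b : Module.Basis (Fin (p + 1) ⊕ Bool) F M)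

variable (hbr : ∀ (y : M) (i : Fin (p + 1)) (k : ℕ), (i : ℕ) + k ≤ p →
    ⁅y, b (Sum.inl i)⁆ ∈ Sk b (k + 1))
variable (hlast : ∀ (y : M) (t : Bool), ⁅y, b (Sum.inr t)⁆ ∈ Sk b 1)

include hbr hlast in
lemma mem_S1 (y w : M) : ⁅y, w⁆ ∈ Sk b 1 := by
  rw [lie_expand_left b w y]
  apply Submodule.sum_mem
  rintro (i | t) -
  · exact Submodule.smul_mem _ _ (hbr y i 0 (by omega))
  · exact Submodule.smul_mem _ _ (hlast y t)

include hbr in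
lemma S_lie (k : ℕ) (y m : M) (hm : m ∈ Sk b k) : ⁅y, m⁆ ∈ Sk b (k + 1) := by
  induction hm using Submodule.span_induction with
  | mem w hw =>
    obtain ⟨-, ⟨i, hi, rfl⟩, rfl⟩ := hw
    exact hbr y i k hi
  | zero => simp
  | add u v _ _ hu hv => rw [lie_add]; exact Submodule.add_mem _ hu hv
  | smul t u _ hu => rw [lie_smul]; exact Submodule.smul_mem _ t hu

/-- `Sk b (k+1)` as a Lie submodule. -/
noncomputable def NS (k : ℕ)
    (h : ∀ (y m : M), m ∈ Sk b (k + 1) → ⁅y, m⁆ ∈ Sk b (k + 1)) :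
    LieSubmodule F M M :=
  { Sk b (k + 1) with lie_mem := fun {x m} hm => h x m hm }

lemma mem_NS {k : ℕ} {h} {m : M} : m ∈ NS b k h ↔ m ∈ Sk b (k + 1) := Iff.rfl

include hbr hlast in
lemma lcs_le (k : ℕ) {m : M}
    (hm : m ∈ LieModule.lowerCentralSeries F M M (k + 1)) : m ∈ Sk b (k + 1) := by
  induction k generalizing m with
  | zero =>
    rw [LieModule.lowerCentralSeries_succ] at hm
    have hm' : m ∈ Submodule.span F
        {m : M | ∃ (x : (⊤ : LieIdeal F M)) (n : LieModule.lowerCentralSeries F M M 0),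
          ⁅(x : M), (n : M)⁆ = m} := by
      rw [← LieSubmodule.lieIdeal_oper_eq_linear_span]; exact hm
    clear hm
    induction hm' using Submodule.span_induction with
    | mem w hw => obtain ⟨x, n, rfl⟩ := hw; exact mem_S1 b hbr hlast x n
    | zero => simp
    | add u v _ _ hu hv => exact Submodule.add_mem _ hu hv
    | smul t u _ hu => exact Submodule.smul_mem _ t hu
  | succ k ih =>
    rw [LieModule.lowerCentralSeries_succ] at hm
    have hm' : m ∈ Submodule.span F
        {m : M | ∃ (x : (⊤ : LieIdeal F M)) (n : LieModule.lowerCentralSeries F M M (k + 1)),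
          ⁅(x : M), (n : M)⁆ = m} := by
      rw [← LieSubmodule.lieIdeal_oper_eq_linear_span]; exact hm
    clear hm
    induction hm' using Submodule.span_induction with
    | mem w hw => obtain ⟨x, n, rfl⟩ := hw; exact S_lie b hbr (k + 1) x n (ih n.2)
    | zero => simp
    | add u v _ _ hu hv => exact Submodule.add_mem _ hu hv
    | smul t u _ hu => exact Submodule.smul_mem _ t hu

end generic

section generic2

variable {F M : Type*} [Field F] [LieRing M] [LieAlgebra F M] {p : ℕ}
variable (b : Module.Basis (Fin (p + 1) ⊕ Bool) F M)
variable (hlam : ∀ i : Fin (p + 1), ⁅b (.inr false), b (.inl i)⁆ =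
      if (i : ℕ) = 0 then 0
      else b (.inl ⟨(i : ℕ) - 1, lt_of_le_of_lt (Nat.sub_le _ _) i.isLt⟩))

include hlam in
lemma chain_mem : ∀ k : ℕ, k ≤ p →
    b (Sum.inl ⟨p - k, by omega⟩) ∈ LieModule.lowerCentralSeries F M M k := by
  intro k
  induction k with
  | zero => intro _; simp
  | succ k ih =>
    intro hk
    rw [LieModule.lowerCentralSeries_succ]
    have h1 := ih (by omega)
    have h2 := LieSubmodule.lie_mem_lie (LieSubmodule.mem_top (b (Sum.inr false)))
      h1 (N := LieModule.lowerCentralSeries F M M k) (I := ⊤)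
    rw [hlam ⟨p - k, by omega⟩] at h2
    rw [if_neg (by simp; omega)] at h2
    convert h2 using 3
    simp only [Fin.mk.injEq]; omega

include hlam in
lemma lcs_ne_bot : LieModule.lowerCentralSeries F M M p ≠ ⊥ := by
  intro h
  have := chain_mem b hlam p le_rfl
  rw [h, LieSubmodule.mem_bot] at this
  exact b.ne_zero _ this

variable (hA : ∀ i j : Fin (p + 1), ⁅b (.inl i), b (.inl j)⁆ = 0)

include hA in
lemma abelian_S {u v : M} (hu : u ∈ Sk b 1) (hv : v ∈ Sk b 1) : ⁅u, v⁆ = 0 := by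
  have key : ∀ i : Fin (p + 1), ∀ v ∈ Sk b 1, ⁅b (Sum.inl i), v⁆ = 0 := by
    intro i v hv
    induction hv using Submodule.span_induction with
    | mem w hw => obtain ⟨-, ⟨j, hj, rfl⟩, rfl⟩ := hw; exact hA i j
    | zero => simp
    | add u' v' _ _ hu' hv' => rw [lie_add, hu', hv', add_zero]
    | smul t u' _ hu' => rw [lie_smul, hu', smul_zero]
  induction hu using Submodule.span_induction with
  | mem w hw => obtain ⟨-, ⟨j, hj, rfl⟩, rfl⟩ := hw; exact key j v hv
  | zero => simp
  | add u' v' _ _ hu' hv' => rw [add_lie, hu', hv', add_zero]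
  | smul t u' _ hu' => rw [smul_lie, hu', smul_zero]

include hlam in
lemma coords_vanish (y : M) (hy : ⁅b (Sum.inr false), y⁆ = 0)
    (hpi : ⁅b (Sum.inr false), b (Sum.inr true)⁆ = 0) :
    ∀ i : Fin (p + 1), (i : ℕ) ≠ 0 → b.repr y (Sum.inl i) = 0 := by
  intro i hi
  have h := (lie_expand_left b y (b (Sum.inr false))).symm
  rw [hy] at h
  set j : Fin (p + 1) := ⟨(i : ℕ) - 1, by omega⟩ with hj
  have h2 := congrArg (b.coord (Sum.inl j)) h
  rw [map_sum, map_zero] at h2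
  rw [Finset.sum_eq_single (Sum.inl i)] at h2
  · rw [map_smul, hlam i, if_neg hi, Module.Basis.coord_apply, Module.Basis.repr_self] at h2
    simpa [hj] using h2
  · rintro (k | t) - hne
    · rw [map_smul, hlam k]
      by_cases hk : (k : ℕ) = 0
      · rw [if_pos hk]; simp
      · rw [if_neg hk, Module.Basis.coord_apply, Module.Basis.repr_self]
        have : (⟨(k : ℕ) - 1, by omega⟩ : Fin (p + 1)) ≠ j := by
          simp only [hj, ne_eq, Fin.mk.injEq]
          have : (k : ℕ) ≠ (i : ℕ) := fun hc => hne (congrArg Sum.inl (Fin.ext hc))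
          omega
        rw [Finsupp.single_apply, if_neg (by simpa using this)]
        simp
    · cases t
      · simp
      · rw [map_smul, hpi]; simp
  · simp

end generic2

section main

variable {F L : Type*} [Field F] [LieRing L] [LieAlgebra F L] {p : ℕ}
variable (b : Module.Basis (Fin (p + 1) ⊕ Bool) F L)

-- L-style bracket layer lemma
lemma hbrL (hp : p ≠ 0)
    (hLA : ∀ i j : Fin (p + 1), ⁅b (.inl i), b (.inl j)⁆ = 0)
    (hLlam : ∀ i : Fin (p + 1), ⁅b (.inr false), b (.inl i)⁆ =
      if (i : ℕ) = 0 then 0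
      else b (.inl ⟨(i : ℕ) - 1, lt_of_le_of_lt (Nat.sub_le _ _) i.isLt⟩))
    (hLpi : ∀ i : Fin (p + 1), ⁅b (.inr true), b (.inl i)⁆ =
      if (i : ℕ) = p then b (.inl ⟨0, Nat.succ_pos p⟩) else 0) :
    ∀ (y : L) (i : Fin (p + 1)) (k : ℕ), (i : ℕ) + k ≤ p →
      ⁅y, b (Sum.inl i)⁆ ∈ Sk b (k + 1) := by
  intro y i k hik
  rw [lie_expand_right b y (b (Sum.inl i))]
  apply Submodule.sum_mem
  rintro (j | t) -
  · rw [hLA j i]; simp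
  · cases t
    · rw [hLlam i]
      by_cases hi : (i : ℕ) = 0
      · rw [if_pos hi]; simp
      · rw [if_neg hi]
        apply Submodule.smul_mem
        apply Submodule.subset_span
        exact Set.mem_image_of_mem b (Set.mem_image_of_mem Sum.inl
          (show ((⟨(i : ℕ) - 1, _⟩ : Fin (p + 1)) : ℕ) + (k + 1) ≤ p by simp; omega))
    · rw [hLpi i]
      by_cases hip : (i : ℕ) = p
      · rw [if_pos hip]
        apply Submodule.smul_mem
        apply Submodule.subset_span
        exact Set.mem_image_of_mem b (Set.mem_image_of_mem Sum.inl
          (show ((⟨0, Nat.succ_pos p⟩ : Fin (p + 1)) : ℕ) + (k + 1) ≤ p by simp; omega))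
      · rw [if_neg hip]; simp

lemma hlastL
    (hLlam : ∀ i : Fin (p + 1), ⁅b (.inr false), b (.inl i)⁆ =
      if (i : ℕ) = 0 then 0
      else b (.inl ⟨(i : ℕ) - 1, lt_of_le_of_lt (Nat.sub_le _ _) i.isLt⟩))
    (hLpi : ∀ i : Fin (p + 1), ⁅b (.inr true), b (.inl i)⁆ =
      if (i : ℕ) = p then b (.inl ⟨0, Nat.succ_pos p⟩) else 0)
    (hLlampi : ⁅b (.inr false), b (.inr true)⁆ = 0) (hp : p ≠ 0) :
    ∀ (y : L) (t : Bool), ⁅y, b (Sum.inr t)⁆ ∈ Sk b 1 := by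
  intro y t
  rw [lie_expand_right b y (b (Sum.inr t))]
  apply Submodule.sum_mem
  rintro (j | s) -
  · rw [← lie_skew]
    apply Submodule.smul_mem
    apply Submodule.neg_mem
    cases t
    · rw [hLlam j]
      by_cases hj : (j : ℕ) = 0
      · rw [if_pos hj]; simp
      · rw [if_neg hj]
        apply Submodule.subset_span
        exact Set.mem_image_of_mem b (Set.mem_image_of_mem Sum.inl
          (show ((⟨(j : ℕ) - 1, _⟩ : Fin (p + 1)) : ℕ) + 1 ≤ p by
            simp; omega))
    · rw [hLpi j]
      by_cases hj : (j : ℕ) = p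
      · rw [if_pos hj]
        apply Submodule.subset_span
        exact Set.mem_image_of_mem b (Set.mem_image_of_mem Sum.inl
          (show ((⟨0, Nat.succ_pos p⟩ : Fin (p + 1)) : ℕ) + 1 ≤ p by simp; omega))
      · rw [if_neg hj]; simp
  · cases s <;> cases t
    · simp
    · rw [hLlampi]; simp
    · rw [← lie_skew, hLlampi]; simp
    · simp

end main

section mainH

variable {F H : Type*} [Field F] [LieRing H] [LieAlgebra F H] {p : ℕ}
variable (c : Module.Basis (Fin (p + 1) ⊕ Bool) F H)

lemma hbrH
    (hHA : ∀ i j : Fin (p + 1), ⁅c (.inl i), c (.inl j)⁆ = 0)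
    (hHlam : ∀ i : Fin (p + 1), ⁅c (.inr false), c (.inl i)⁆ =
      if (i : ℕ) = 0 then 0
      else c (.inl ⟨(i : ℕ) - 1, lt_of_le_of_lt (Nat.sub_le _ _) i.isLt⟩))
    (hHz : ∀ y : H, ⁅c (.inr true), y⁆ = 0) :
    ∀ (y : H) (i : Fin (p + 1)) (k : ℕ), (i : ℕ) + k ≤ p →
      ⁅y, c (Sum.inl i)⁆ ∈ Sk c (k + 1) := by
  intro y i k hik
  rw [lie_expand_right c y (c (Sum.inl i))]
  apply Submodule.sum_mem
  rintro (j | t) -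
  · rw [hHA j i]; simp
  · cases t
    · rw [hHlam i]
      by_cases hi : (i : ℕ) = 0
      · rw [if_pos hi]; simp
      · rw [if_neg hi]
        apply Submodule.smul_mem
        apply Submodule.subset_span
        exact Set.mem_image_of_mem c (Set.mem_image_of_mem Sum.inl
          (show ((⟨(i : ℕ) - 1, _⟩ : Fin (p + 1)) : ℕ) + (k + 1) ≤ p by simp; omega))
    · rw [hHz]; simp

lemma hlastH
    (hHlam : ∀ i : Fin (p + 1), ⁅c (.inr false), c (.inl i)⁆ =
      if (i : ℕ) = 0 then 0
      else c (.inl ⟨(i : ℕ) - 1, lt_of_le_of_lt (Nat.sub_le _ _) i.isLt⟩))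
    (hHz : ∀ y : H, ⁅c (.inr true), y⁆ = 0) :
    ∀ (y : H) (t : Bool), ⁅y, c (Sum.inr t)⁆ ∈ Sk c 1 := by
  intro y t
  rw [lie_expand_right c y (c (Sum.inr t))]
  apply Submodule.sum_mem
  rintro (j | s) -
  · rw [← lie_skew]
    apply Submodule.smul_mem
    apply Submodule.neg_mem
    cases t
    · rw [hHlam j]
      by_cases hj : (j : ℕ) = 0
      · rw [if_pos hj]; simp
      · rw [if_neg hj]
        apply Submodule.subset_span
        exact Set.mem_image_of_mem c (Set.mem_image_of_mem Sum.inl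
          (show ((⟨(j : ℕ) - 1, _⟩ : Fin (p + 1)) : ℕ) + 1 ≤ p by simp; omega))
    · rw [hHz]; simp
  · cases s
    · cases t
      · simp
      · rw [← lie_skew, hHz]; simp
    · rw [hHz]; simp

end mainH


section centers

variable {F L : Type*} [Field F] [LieRing L] [LieAlgebra F L] {p : ℕ}
variable (b : Module.Basis (Fin (p + 1) ⊕ Bool) F L)

lemma centerL (hp2 : 2 ≤ p)
    (hLA : ∀ i j : Fin (p + 1), ⁅b (.inl i), b (.inl j)⁆ = 0)
    (hLlam : ∀ i : Fin (p + 1), ⁅b (.inr false), b (.inl i)⁆ =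
      if (i : ℕ) = 0 then 0
      else b (.inl ⟨(i : ℕ) - 1, lt_of_le_of_lt (Nat.sub_le _ _) i.isLt⟩))
    (hLpi : ∀ i : Fin (p + 1), ⁅b (.inr true), b (.inl i)⁆ =
      if (i : ℕ) = p then b (.inl ⟨0, Nat.succ_pos p⟩) else 0)
    (hLlampi : ⁅b (.inr false), b (.inr true)⁆ = 0) :
    (LieAlgebra.center F L).toSubmodule =
      Submodule.span F {b (.inl ⟨0, Nat.succ_pos p⟩)} := by
  have h1p : ¬ (1 : ℕ) = p := by omega
  have hp0 : ¬ (p : ℕ) = 0 := by omega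
  have hlt1 : (1 : ℕ) < p + 1 := by omega
  have hltp : p < p + 1 := by omega
  -- bracket computations at specific indices
  have t1 : ⁅b (Sum.inr false), b (Sum.inl ⟨1, hlt1⟩)⁆ = b (Sum.inl ⟨0, Nat.succ_pos p⟩) := by
    rw [hLlam ⟨1, hlt1⟩, if_neg (show ¬(1 : ℕ) = 0 by omega)]
    rfl
  have t2 : ⁅b (Sum.inr true), b (Sum.inl ⟨1, hlt1⟩)⁆ = 0 := by
    rw [hLpi ⟨1, hlt1⟩, if_neg h1p]
  have t3 : ⁅b (Sum.inr false), b (Sum.inl ⟨p, hltp⟩)⁆ =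
      b (Sum.inl ⟨p - 1, lt_of_le_of_lt (Nat.sub_le _ _) hltp⟩) := by
    rw [hLlam ⟨p, hltp⟩, if_neg hp0]
  have t4 : ⁅b (Sum.inr true), b (Sum.inl ⟨p, hltp⟩)⁆ = b (Sum.inl ⟨0, Nat.succ_pos p⟩) := by
    rw [hLpi ⟨p, hltp⟩, if_pos rfl]
  have t5 : ⁅b (Sum.inr false), b (Sum.inl ⟨0, Nat.succ_pos p⟩)⁆ = 0 := by
    rw [hLlam ⟨0, Nat.succ_pos p⟩, if_pos rfl]
  have t6 : ⁅b (Sum.inr true), b (Sum.inl ⟨0, Nat.succ_pos p⟩)⁆ = 0 := by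
    rw [hLpi ⟨0, Nat.succ_pos p⟩, if_neg (show ¬(0 : ℕ) = p by omega)]
  apply le_antisymm
  · intro y hy
    have h : ∀ x : L, ⁅x, y⁆ = 0 := (LieModule.mem_maxTrivSubmodule F L L y).mp hy
    have hcoords := coords_vanish b hLlam y (h _) hLlampi
    have hy1 : ⁅y, b (Sum.inl ⟨1, hlt1⟩)⁆ = 0 := by rw [← lie_skew, h, neg_zero]
    have e1 : ⁅y, b (Sum.inl ⟨1, hlt1⟩)⁆ =
        b.repr y (Sum.inr false) • b (Sum.inl ⟨0, Nat.succ_pos p⟩) := by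
      rw [lie_expand_right b y (b (Sum.inl ⟨1, hlt1⟩))]
      simp only [Fintype.sum_sum_type, Fintype.sum_bool, hLA, t1, t2, smul_zero,
        Finset.sum_const_zero, zero_add, add_zero]
    have halam : b.repr y (Sum.inr false) = 0 := by
      rw [hy1] at e1
      rcases smul_eq_zero.mp e1.symm with h' | h'
      · exact h'
      · exact absurd h' (b.ne_zero _)
    have hyp : ⁅y, b (Sum.inl ⟨p, hltp⟩)⁆ = 0 := by rw [← lie_skew, h, neg_zero]
    have e2 : ⁅y, b (Sum.inl ⟨p, hltp⟩)⁆ =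
        b.repr y (Sum.inr true) • b (Sum.inl ⟨0, Nat.succ_pos p⟩) := by
      rw [lie_expand_right b y (b (Sum.inl ⟨p, hltp⟩))]
      simp only [Fintype.sum_sum_type, Fintype.sum_bool, hLA, t3, t4, smul_zero,
        Finset.sum_const_zero, zero_add, add_zero, halam, zero_smul]
    have hapi2 : b.repr y (Sum.inr true) = 0 := by
      rw [hyp] at e2
      rcases smul_eq_zero.mp e2.symm with h' | h'
      · exact h'
      · exact absurd h' (b.ne_zero _)
    have himg : ({b (Sum.inl ⟨0, Nat.succ_pos p⟩)} : Set L) =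
        b '' {Sum.inl ⟨0, Nat.succ_pos p⟩} := by simp
    rw [himg, Module.Basis.mem_span_image]
    intro s hs
    simp only [Finset.coe_sort_coe, Finsupp.mem_support_iff, Finset.mem_coe] at hs
    rcases s with i | t
    · by_cases hi : (i : ℕ) = 0
      · simp only [Set.mem_singleton_iff]
        congr 1
        exact Fin.ext hi
      · exact absurd (hcoords i hi) hs
    · cases t
      · exact absurd halam hs
      · exact absurd hapi2 hs
  · rw [Submodule.span_le, Set.singleton_subset_iff]
    show b (Sum.inl ⟨0, Nat.succ_pos p⟩) ∈ LieAlgebra.center F L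
    rw [LieModule.mem_maxTrivSubmodule]
    intro x
    rw [lie_expand_right b x (b (Sum.inl ⟨0, Nat.succ_pos p⟩))]
    simp only [Fintype.sum_sum_type, Fintype.sum_bool, hLA, t5, t6, smul_zero,
      Finset.sum_const_zero, zero_add, add_zero]

end centers

section centersH

variable {F H : Type*} [Field F] [LieRing H] [LieAlgebra F H] {p : ℕ}
variable (c : Module.Basis (Fin (p + 1) ⊕ Bool) F H)

lemma centerH (hp : p ≠ 0)
    (hHA : ∀ i j : Fin (p + 1), ⁅c (.inl i), c (.inl j)⁆ = 0)
    (hHlam : ∀ i : Fin (p + 1), ⁅c (.inr false), c (.inl i)⁆ =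
      if (i : ℕ) = 0 then 0
      else c (.inl ⟨(i : ℕ) - 1, lt_of_le_of_lt (Nat.sub_le _ _) i.isLt⟩))
    (hHz : ∀ y : H, ⁅c (.inr true), y⁆ = 0) :
    (LieAlgebra.center F H).toSubmodule =
      Submodule.span F {c (.inr true), c (.inl ⟨0, Nat.succ_pos p⟩)} := by
  have hlt1 : (1 : ℕ) < p + 1 := by omega
  have t1 : ⁅c (Sum.inr false), c (Sum.inl ⟨1, hlt1⟩)⁆ = c (Sum.inl ⟨0, Nat.succ_pos p⟩) := by
    rw [hHlam ⟨1, hlt1⟩, if_neg (show ¬(1 : ℕ) = 0 by omega)]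
    rfl
  have t5 : ⁅c (Sum.inr false), c (Sum.inl ⟨0, Nat.succ_pos p⟩)⁆ = 0 := by
    rw [hHlam ⟨0, Nat.succ_pos p⟩, if_pos rfl]
  have t6 : ∀ y : H, ⁅c (Sum.inr true), y⁆ = 0 := hHz
  have hzlam : ⁅c (Sum.inr false), c (Sum.inr true)⁆ = 0 := by
    rw [← lie_skew, hHz, neg_zero]
  apply le_antisymm
  · intro y hy
    have h : ∀ x : H, ⁅x, y⁆ = 0 := (LieModule.mem_maxTrivSubmodule F H H y).mp hy
    have hcoords := coords_vanish c hHlam y (h _) hzlam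
    have hy1 : ⁅y, c (Sum.inl ⟨1, hlt1⟩)⁆ = 0 := by rw [← lie_skew, h, neg_zero]
    have e1 : ⁅y, c (Sum.inl ⟨1, hlt1⟩)⁆ =
        c.repr y (Sum.inr false) • c (Sum.inl ⟨0, Nat.succ_pos p⟩) := by
      rw [lie_expand_right c y (c (Sum.inl ⟨1, hlt1⟩))]
      simp only [Fintype.sum_sum_type, Fintype.sum_bool, hHA, t1, t6, smul_zero,
        Finset.sum_const_zero, zero_add, add_zero]
    have halam : c.repr y (Sum.inr false) = 0 := by
      rw [hy1] at e1
      rcases smul_eq_zero.mp e1.symm with h' | h'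
      · exact h'
      · exact absurd h' (c.ne_zero _)
    have himg : ({c (Sum.inr true), c (Sum.inl ⟨0, Nat.succ_pos p⟩)} : Set H) =
        c '' {Sum.inr true, Sum.inl ⟨0, Nat.succ_pos p⟩} := by
      rw [Set.image_insert_eq, Set.image_singleton]
    rw [himg, Module.Basis.mem_span_image]
    intro s hs
    simp only [Finset.coe_sort_coe, Finsupp.mem_support_iff, Finset.mem_coe] at hs
    rcases s with i | t
    · by_cases hi : (i : ℕ) = 0
      · right
        simp only [Set.mem_singleton_iff]
        congr 1
        exact Fin.ext hi
      · exact absurd (hcoords i hi) hs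
    · cases t
      · exact absurd halam hs
      · left; rfl
  · rw [Submodule.span_le]
    rintro v (rfl | rfl)
    · show c (Sum.inr true) ∈ LieAlgebra.center F H
      rw [LieModule.mem_maxTrivSubmodule]
      intro x
      rw [← lie_skew, hHz, neg_zero]
    · show c (Sum.inl ⟨0, Nat.succ_pos p⟩) ∈ LieAlgebra.center F H
      rw [LieModule.mem_maxTrivSubmodule]
      intro x
      rw [lie_expand_right c x (c (Sum.inl ⟨0, Nat.succ_pos p⟩))]
      simp only [Fintype.sum_sum_type, Fintype.sum_bool, hHA, t5, t6, smul_zero,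
        Finset.sum_const_zero, zero_add, add_zero]

end centersH
/-- over a field `F` of characteristic `p > 0`, let `L` be the Lie algebra with
basis `x_0, …, x_p, λ, π` and relations `[λ, x_i] = x_{i−1}`, `[π, x_i] = x_{i−p}`,
`[λ, π] = 0` (`x_i = 0` for `i < 0`, all other brackets of basis vectors zero), and let `H` be
the Lie algebra with basis `x_0, …, x_p, λ, z` with `[λ, x_i] = x_{i−1}` and `z` central.
Then `L` and `H` are both nilpotent of class `p + 1` and metabelian, `Z(L) = F·x_0`,
`Z(H) = F·z + F·x_0`, and `L ≇ H`.
(Basis indexed by `Fin (p+1) ⊕ Bool`: `inl i ↦ x_i`, `inr false ↦ λ`, `inr true ↦ π`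
resp. `z`.) -/
theorem counterexample_char_p (F : Type*) [Field F] (p : ℕ) (hp : p ≠ 0) [CharP F p]
    (L H : Type*) [LieRing L] [LieAlgebra F L] [LieRing H] [LieAlgebra F H]
    (b : Module.Basis (Fin (p + 1) ⊕ Bool) F L) (c : Module.Basis (Fin (p + 1) ⊕ Bool) F H)
    -- relations in L
    (hLA : ∀ i j : Fin (p + 1), ⁅b (.inl i), b (.inl j)⁆ = 0)
    (hLlam : ∀ i : Fin (p + 1), ⁅b (.inr false), b (.inl i)⁆ =
      if (i : ℕ) = 0 then 0
      else b (.inl ⟨(i : ℕ) - 1, lt_of_le_of_lt (Nat.sub_le _ _) i.isLt⟩))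
    (hLpi : ∀ i : Fin (p + 1), ⁅b (.inr true), b (.inl i)⁆ =
      if (i : ℕ) = p then b (.inl ⟨0, Nat.succ_pos p⟩) else 0)
    (hLlampi : ⁅b (.inr false), b (.inr true)⁆ = 0)
    -- relations in H
    (hHA : ∀ i j : Fin (p + 1), ⁅c (.inl i), c (.inl j)⁆ = 0)
    (hHlam : ∀ i : Fin (p + 1), ⁅c (.inr false), c (.inl i)⁆ =
      if (i : ℕ) = 0 then 0
      else c (.inl ⟨(i : ℕ) - 1, lt_of_le_of_lt (Nat.sub_le _ _) i.isLt⟩))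
    (hHz : ∀ y : H, ⁅c (.inr true), y⁆ = 0) :
    -- L and H are nilpotent of class p + 1
    (LieModule.lowerCentralSeries F L L (p + 1) = ⊥ ∧
      LieModule.lowerCentralSeries F L L p ≠ ⊥) ∧
    (LieModule.lowerCentralSeries F H H (p + 1) = ⊥ ∧
      LieModule.lowerCentralSeries F H H p ≠ ⊥) ∧
    -- L and H are metabelian
    (∀ a b' c' d : L, ⁅⁅a, b'⁆, ⁅c', d⁆⁆ = 0) ∧
    (∀ a b' c' d : H, ⁅⁅a, b'⁆, ⁅c', d⁆⁆ = 0) ∧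
    -- centres
    (LieAlgebra.center F L).toSubmodule =
      Submodule.span F {b (.inl ⟨0, Nat.succ_pos p⟩)} ∧
    (LieAlgebra.center F H).toSubmodule =
      Submodule.span F {c (.inr true), c (.inl ⟨0, Nat.succ_pos p⟩)} ∧
    -- L and H are not isomorphic
    ¬Nonempty (L ≃ₗ⁅F⁆ H) := by
  have hprime : p.Prime := (CharP.char_is_prime_or_zero F p).resolve_right hp
  have hp2 : 2 ≤ p := hprime.two_le
  have hbrL' := hbrL b hp hLA hLlam hLpi
  have hlastL' := hlastL b hLlam hLpi hLlampi hp
  have hbrH' := hbrH c hHA hHlam hHz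
  have hlastH' := hlastH c hHlam hHz
  have hLbot : LieModule.lowerCentralSeries F L L (p + 1) = ⊥ := by
    rw [LieSubmodule.eq_bot_iff]
    intro m hm
    have := lcs_le b hbrL' hlastL' p hm
    rw [Sk_top b] at this
    simpa using this
  have hHbot : LieModule.lowerCentralSeries F H H (p + 1) = ⊥ := by
    rw [LieSubmodule.eq_bot_iff]
    intro m hm
    have := lcs_le c hbrH' hlastH' p hm
    rw [Sk_top c] at this
    simpa using this
  have hZL : (LieAlgebra.center F L).toSubmodule =
      Submodule.span F {b (.inl ⟨0, Nat.succ_pos p⟩)} := centerL b hp2 hLA hLlam hLpi hLlampi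
  have hZH : (LieAlgebra.center F H).toSubmodule =
      Submodule.span F {c (.inr true), c (.inl ⟨0, Nat.succ_pos p⟩)} :=
    centerH c hp hHA hHlam hHz
  refine ⟨⟨hLbot, lcs_ne_bot b hLlam⟩, ⟨hHbot, lcs_ne_bot c hHlam⟩,
    fun a b' c' d => abelian_S b hLA (mem_S1 b hbrL' hlastL' a b') (mem_S1 b hbrL' hlastL' c' d),
    fun a b' c' d => abelian_S c hHA (mem_S1 c hbrH' hlastH' a b') (mem_S1 c hbrH' hlastH' c' d),
    hZL, hZH, ?_⟩
  rintro ⟨e⟩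
  set x0 : L := b (.inl ⟨0, Nat.succ_pos p⟩) with hx0
  set z : H := c (.inr true) with hzdef
  set w0 : H := c (.inl ⟨0, Nat.succ_pos p⟩) with hw0
  have hcent : ∀ v : H, (∀ x : H, ⁅x, v⁆ = 0) → ∃ t : F, e.symm v = t • x0 := by
    intro v hv
    have hmem : e.symm v ∈ LieAlgebra.center F L := by
      rw [LieModule.mem_maxTrivSubmodule]
      intro x
      have h1 : ⁅x, e.symm v⁆ = e.symm ⁅e x, v⁆ := by
        rw [LieEquiv.map_lie e.symm, e.symm_apply_apply]
      rw [h1, hv (e x)]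
      rw [← LieEquiv.coe_toLinearEquiv]
      exact map_zero _
    have : e.symm v ∈ Submodule.span F {x0} := by
      rw [← hZL]
      exact hmem
    obtain ⟨t, ht⟩ := Submodule.mem_span_singleton.mp this
    exact ⟨t, ht.symm⟩
  obtain ⟨t, ht⟩ := hcent z (fun x => by rw [← lie_skew, hHz, neg_zero])
  obtain ⟨s, hs⟩ := hcent w0 (by
    have := (Submodule.span_le.mp hZH.ge) (show w0 ∈ ({z, w0} : Set H) from by simp)
    exact (LieModule.mem_maxTrivSubmodule F H H w0).mp this)
  have hz' : z = t • e x0 := by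
    have h4 := congrArg e ht
    rw [e.apply_symm_apply, ← LieEquiv.coe_toLinearEquiv, map_smul] at h4
    simpa [LieEquiv.coe_toLinearEquiv] using h4
  have hw' : w0 = s • e x0 := by
    have h4 := congrArg e hs
    rw [e.apply_symm_apply, ← LieEquiv.coe_toLinearEquiv, map_smul] at h4
    simpa [LieEquiv.coe_toLinearEquiv] using h4
  have htne : t ≠ 0 := by
    intro h0
    rw [h0, zero_smul] at hz'
    exact c.ne_zero _ hz'
  have hfinal : w0 = (s * t⁻¹) • z := by
    rw [hz', hw', smul_smul]
    congr 1
    field_simp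
  have h3 := congrArg (fun v => c.repr v (Sum.inl ⟨0, Nat.succ_pos p⟩)) hfinal
  rw [hw0, hzdef] at h3
  simp only [map_smul, Finsupp.smul_apply, Module.Basis.repr_self, smul_eq_mul,
    Finsupp.single_apply] at h3
  simp at h3
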